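/- Let S be a finite nonempty alphabet, n ≥ 1, and F = {f_i : ℝⁿ → ℝⁿ}_{i∈S} a family of continuous maps. If there exists a path-complete Lyapunov function (V, G) for F, then the switched system x(k+1) = f_{σ(k)}(x(k)) is uniformly globally asymptotically stable (UGAS). -/

import Mathlib

open Filter Topology NNReal

def IsClassKInf (α : ℝ≥0 → ℝ≥0) : Prop :=
  Continuous α ∧ α 0 = 0 ∧ StrictMono α ∧ ∀ M : ℝ≥0, ∃ r, M ≤ α r

def IsClassKL (β : ℝ≥0 → ℝ≥0 → ℝ≥0) : Prop :=
  Continuous (fun p : ℝ≥0 × ℝ≥0 => β p.1 p.2) ∧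
  (∀ t, Continuous (fun r => β r t) ∧ β 0 t = 0 ∧ StrictMono (fun r => β r t)) ∧
  (∀ r, Antitone (β r) ∧ Tendsto (β r) atTop (𝓝 0))

def PathComplete {N S : Type*} (E : Set (N × N × S)) : Prop :=
  ∀ K : ℕ, 1 ≤ K → ∀ j : Fin K → S, ∃ a : Fin (K + 1) → N,
    ∀ k : Fin K, (a k.castSucc, a k.succ, j k) ∈ E

def sol {n : ℕ} {S : Type*} (f : S → EuclideanSpace ℝ (Fin n) → EuclideanSpace ℝ (Fin n))
    (σ : ℕ → S) (x0 : EuclideanSpace ℝ (Fin n)) : ℕ → EuclideanSpace ℝ (Fin n)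
  | 0 => x0
  | k + 1 => f (σ k) (sol f σ x0 k)

def UGAS {n : ℕ} {S : Type*}
    (f : S → EuclideanSpace ℝ (Fin n) → EuclideanSpace ℝ (Fin n)) : Prop :=
  ∃ β : ℝ≥0 → ℝ≥0 → ℝ≥0, IsClassKL β ∧
    ∀ (σ : ℕ → S) (x0 : EuclideanSpace ℝ (Fin n)) (k : ℕ),
      ‖sol f σ x0 k‖₊ ≤ β ‖x0‖₊ (k : ℝ≥0)

def IsPCLF {n : ℕ} {S N : Type*} (E : Set (N × N × S))
    (f : S → EuclideanSpace ℝ (Fin n) → EuclideanSpace ℝ (Fin n))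
    (V : N → EuclideanSpace ℝ (Fin n) → ℝ) : Prop :=
  PathComplete E ∧ (∀ s, Continuous (V s)) ∧
  ∃ (α₁ α₂ : ℝ≥0 → ℝ≥0) (γ : ℝ≥0), IsClassKInf α₁ ∧ IsClassKInf α₂ ∧ γ < 1 ∧
    (∀ s x, (α₁ ‖x‖₊ : ℝ) ≤ V s x ∧ V s x ≤ (α₂ ‖x‖₊ : ℝ)) ∧
    (∀ a b i, (a, b, i) ∈ E → ∀ x, V b (f i x) ≤ (γ : ℝ) * V a x)

def IsCoveringFamily {S : Type*} (C : Finset (Set (List S))) : Prop :=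
  (∀ B ∈ C, Language.IsRegular (B : Language S)) ∧
  (⋃ B ∈ C, B) = Set.univ ∧
  ∀ B ∈ C, ∀ h : S, ∃ C' ∈ C, (fun w => h :: w) '' B ⊆ C'

def IsMBLF {n : ℕ} {S : Type*} (C : Finset (Set (List S)))
    (f : S → EuclideanSpace ℝ (Fin n) → EuclideanSpace ℝ (Fin n))
    (W : {B // B ∈ C} → EuclideanSpace ℝ (Fin n) → ℝ) : Prop :=
  (∀ B, Continuous (W B)) ∧
  ∃ (α₁ α₂ : ℝ≥0 → ℝ≥0) (γ : ℝ≥0), IsClassKInf α₁ ∧ IsClassKInf α₂ ∧ γ < 1 ∧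
    (∀ B x, (α₁ ‖x‖₊ : ℝ) ≤ W B x ∧ W B x ≤ (α₂ ‖x‖₊ : ℝ)) ∧
    (∀ (B C' : {B // B ∈ C}) (h : S),
      (fun w => h :: w) '' (B : Set (List S)) ⊆ (C' : Set (List S)) →
      ∀ x, W C' (f h x) ≤ (γ : ℝ) * W B x)

def prefixClass {S : Type*} (i : List S) : Set (List S) := {w | w <+: i ∨ i <+: w}

/-- existence of a path-complete Lyapunov function implies UGAS. -/
theorem pclf_implies_ugas {S : Type} [Fintype S] [Nonempty S]
    (n : ℕ) (hn : 1 ≤ n)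
    (f : S → EuclideanSpace ℝ (Fin n) → EuclideanSpace ℝ (Fin n))
    (hf : ∀ i, Continuous (f i))
    {N : Type} [Fintype N] (E : Set (N × N × S))
    (V : N → EuclideanSpace ℝ (Fin n) → ℝ)
    (hV : IsPCLF E f V) : UGAS f := by
  obtain ⟨hPC, hVcont, α₁, α₂, γ, hα₁, hα₂, hγ, hbound, hdec⟩ := hV
  obtain ⟨i0⟩ := ‹Nonempty S›
  obtain ⟨apath, -⟩ := hPC 1 le_rfl (fun _ => i0)
  have hN : Nonempty N := ⟨apath 0⟩
  set γ' : ℝ≥0 := max γ (1/2) with hγ'def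
  have hγ'pos : (0 : ℝ≥0) < γ' := lt_of_lt_of_le (by norm_num) (le_max_right _ _)
  have hγ'lt : γ' < 1 := max_lt hγ (by exact_mod_cast (by norm_num : (1:ℝ)/2 < 1))
  have hγle : γ ≤ γ' := le_max_left _ _
  -- α₁ is surjective
  have hα₁surj : Function.Surjective α₁ := by
    intro y
    obtain ⟨r, hr⟩ := hα₁.2.2.2 y
    have h0 : α₁ 0 = 0 := hα₁.2.1
    have hy : y ∈ Set.Icc (α₁ 0) (α₁ r) := ⟨by rw [h0]; exact zero_le, hr⟩
    obtain ⟨x, -, hx⟩ := intermediate_value_Icc (zero_le : (0:ℝ≥0) ≤ r) hα₁.1.continuousOn hy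
    exact ⟨x, hx⟩
  let e : ℝ≥0 ≃o ℝ≥0 := StrictMono.orderIsoOfSurjective α₁ hα₁.2.2.1 hα₁surj
  have he : ∀ x, e x = α₁ x := fun _ => rfl
  have hesymm0 : e.symm 0 = 0 := by
    have h0 : e 0 = 0 := by rw [he]; exact hα₁.2.1
    exact e.symm_apply_eq.2 h0.symm
  have hesymmc : Continuous (e.symm : ℝ≥0 → ℝ≥0) := e.symm.continuous
  -- α₁ ≤ α₂
  have hα12 : ∀ r : ℝ≥0, α₁ r ≤ α₂ r := by
    intro r
    set x : EuclideanSpace ℝ (Fin n) := EuclideanSpace.single ⟨0, hn⟩ (r : ℝ) with hxdef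
    have hx : ‖x‖₊ = r := by
      rw [hxdef, EuclideanSpace.nnnorm_single]
      ext
      rw [coe_nnnorm, Real.norm_eq_abs, abs_of_nonneg r.coe_nonneg]
    obtain ⟨s⟩ := hN
    have h1 := (hbound s x).1
    have h2 := (hbound s x).2
    rw [hx] at h1 h2
    exact_mod_cast h1.trans h2
  -- key decrease estimate
  have key : ∀ (σ : ℕ → S) (x0 : EuclideanSpace ℝ (Fin n)) (k : ℕ),
      (α₁ ‖sol f σ x0 k‖₊ : ℝ) ≤ ((γ' : ℝ)) ^ k * (α₂ ‖x0‖₊ : ℝ) := by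
    intro σ x0 k
    rcases Nat.eq_zero_or_pos k with rfl | hk
    · simpa [sol] using (NNReal.coe_le_coe.2 (hα12 ‖x0‖₊))
    · obtain ⟨a, ha⟩ := hPC k hk (fun i : Fin k => σ i)
      have step : ∀ m : ℕ, ∀ hm : m ≤ k,
          V (a ⟨m, Nat.lt_succ_of_le hm⟩) (sol f σ x0 m)
            ≤ (γ : ℝ) ^ m * V (a ⟨0, Nat.succ_pos k⟩) x0 := by
        intro m
        induction m with
        | zero => intro hm; simp [sol]
        | succ m ih =>
          intro hm
          have hm' : m ≤ k := Nat.le_of_succ_le hm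
          have hmk : m < k := hm
          have hedge := ha ⟨m, hmk⟩
          have hdec' := hdec _ _ _ hedge (sol f σ x0 m)
          have : V (a ⟨m + 1, Nat.lt_succ_of_le hm⟩) (sol f σ x0 (m + 1))
              ≤ (γ : ℝ) * V (a ⟨m, Nat.lt_succ_of_le hm'⟩) (sol f σ x0 m) := by
            show V (a ⟨m + 1, _⟩) (f (σ m) (sol f σ x0 m)) ≤ _
            convert hdec' using 3 <;> rfl
          calc V (a ⟨m + 1, Nat.lt_succ_of_le hm⟩) (sol f σ x0 (m + 1))
              ≤ (γ : ℝ) * V (a ⟨m, Nat.lt_succ_of_le hm'⟩) (sol f σ x0 m) := this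
            _ ≤ (γ : ℝ) * ((γ : ℝ) ^ m * V (a ⟨0, Nat.succ_pos k⟩) x0) :=
                mul_le_mul_of_nonneg_left (ih hm') γ.2
            _ = (γ : ℝ) ^ (m + 1) * V (a ⟨0, Nat.succ_pos k⟩) x0 := by ring
      have hVnonneg : (0 : ℝ) ≤ V (a ⟨0, Nat.succ_pos k⟩) x0 :=
        le_trans (α₁ ‖x0‖₊).2 (hbound _ x0).1
      calc (α₁ ‖sol f σ x0 k‖₊ : ℝ)
          ≤ V (a ⟨k, Nat.lt_succ_self k⟩) (sol f σ x0 k) := (hbound _ _).1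
        _ ≤ (γ : ℝ) ^ k * V (a ⟨0, Nat.succ_pos k⟩) x0 := step k le_rfl
        _ ≤ (γ' : ℝ) ^ k * V (a ⟨0, Nat.succ_pos k⟩) x0 :=
            mul_le_mul_of_nonneg_right (pow_le_pow_left₀ γ.2 (by exact_mod_cast hγle) k) hVnonneg
        _ ≤ (γ' : ℝ) ^ k * (α₂ ‖x0‖₊ : ℝ) :=
            mul_le_mul_of_nonneg_left (hbound _ x0).2 (by positivity)
  -- the KL function
  refine ⟨fun r t => e.symm (γ' ^ (t : ℝ) * α₂ r), ⟨?_, ?_, ?_⟩, ?_⟩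
  · -- joint continuity
    have hrp : Continuous fun t : ℝ≥0 => γ' ^ (t : ℝ) := by
      rw [continuous_iff_continuousAt]
      intro t
      exact Filter.Tendsto.nnrpow tendsto_const_nhds
        (NNReal.continuous_coe.tendsto t) (Or.inl hγ'pos.ne')
    exact hesymmc.comp ((hrp.comp continuous_snd).mul (hα₂.1.comp continuous_fst))
  · intro t
    refine ⟨hesymmc.comp (continuous_const.mul hα₂.1), ?_, ?_⟩
    · show e.symm (γ' ^ (t : ℝ) * α₂ 0) = 0
      rw [hα₂.2.1, mul_zero, hesymm0]
    · intro r₁ r₂ hr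
      exact e.symm.strictMono (mul_lt_mul_of_pos_left (hα₂.2.2.1 hr)
        (NNReal.rpow_pos hγ'pos))
  · intro r
    constructor
    · intro t₁ t₂ ht
      exact e.symm.monotone (mul_le_mul_left
        (NNReal.rpow_le_rpow_of_exponent_ge hγ'pos hγ'lt.le (by exact_mod_cast ht)) _)
    · have h1 : Tendsto (fun t : ℝ≥0 => γ' ^ (t : ℝ)) atTop (𝓝 0) := by
        rw [← NNReal.tendsto_coe]
        have := (tendsto_rpow_atTop_of_base_lt_one (γ' : ℝ)
          (lt_of_lt_of_le (by norm_num) γ'.2) (by exact_mod_cast hγ'lt)).comp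
          (NNReal.tendsto_coe_atTop.2 (tendsto_id : Tendsto id atTop atTop))
        simpa [Function.comp_def, NNReal.coe_rpow] using this
      have h2 : Tendsto (fun t : ℝ≥0 => γ' ^ (t : ℝ) * α₂ r) atTop (𝓝 0) := by
        simpa using h1.mul tendsto_const_nhds
      have := (hesymmc.tendsto 0).comp h2
      rwa [hesymm0] at this
  · intro σ x0 k
    have h := key σ x0 k
    have hnn : α₁ ‖sol f σ x0 k‖₊ ≤ γ' ^ ((k : ℝ≥0) : ℝ) * α₂ ‖x0‖₊ := by
      rw [show ((k : ℝ≥0) : ℝ) = (k : ℝ) by simp, NNReal.rpow_natCast]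
      rw [← NNReal.coe_le_coe]
      push_cast
      exact h
    calc ‖sol f σ x0 k‖₊ = e.symm (e ‖sol f σ x0 k‖₊) := (e.symm_apply_apply _).symm
      _ = e.symm (α₁ ‖sol f σ x0 k‖₊) := by rw [he]
      _ ≤ e.symm (γ' ^ ((k : ℝ≥0) : ℝ) * α₂ ‖x0‖₊) := e.symm.monotone hnn
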